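/- Let k ≥ 2 be an integer and i an integer with 0 ≤ i ≤ 2k, and let F(z) = φ^{4k−2i}(z) φ^{2i}(3z). Then the limit as Im(z) → ∞ of (4z+1)^{−2k} F(z/(4z+1)) equals (−1)^{i}/3^{i}. That is, the first term of the Fourier series expansion of F at the cusp 1/4 is (−4z−1)^{2k} · (−1)^{i}/3^{i}. -/

import Mathlib

open Complex UpperHalfPlane Filter
open Real Asymptotics Topology

/-- Ramanujan's theta function `φ(z) = ∑_{n ∈ ℤ} q^{n²}`. -/
noncomputable def phi (z : ℂ) : ℂ :=
  ∑' n : ℤ, Complex.exp (2 * Real.pi * Complex.I * (n : ℂ) ^ 2 * z)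

lemma phi_eq_jacobiTheta (z : ℂ) : phi z = jacobiTheta (2 * z) := by
  refine tsum_congr fun n => ?_
  congr 1
  ring

lemma summable_phi_term {z : ℂ} (hz : 0 < z.im) :
    Summable fun n : ℤ => Complex.exp (2 * Real.pi * Complex.I * (n : ℂ) ^ 2 * z) := by
  have h2 : 0 < (2 * z).im := by simp [Complex.mul_im]; linarith
  have := (hasSum_jacobiTheta₂_term 0 h2).summable
  refine this.congr fun n => ?_
  simp only [jacobiTheta₂_term, mul_zero, zero_add]
  congr 1
  ring

lemma tsum_even_part {z : ℂ} (hz : 0 < z.im) :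
    ∑' n : ℤ, (1 + (-1 : ℂ) ^ n) * Complex.exp (2 * Real.pi * Complex.I * (n : ℂ) ^ 2 * z)
      = 2 * phi (4 * z) := by
  have hinj : Function.Injective (fun m : ℤ => 2 * m) := fun a b h => by
    simp only at h; omega
  rw [← Function.Injective.tsum_eq hinj (fun n hn => ?_)]
  · rw [phi, ← tsum_mul_left]
    refine tsum_congr fun m => ?_
    have h1 : ((-1 : ℂ)) ^ (2 * m) = 1 := by
      rw [zpow_mul]; norm_num
    rw [h1]
    have h2 : Complex.exp (2 * Real.pi * Complex.I * ((2 * m : ℤ) : ℂ) ^ 2 * z)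
        = Complex.exp (2 * Real.pi * Complex.I * (m : ℂ) ^ 2 * (4 * z)) := by
      congr 1; push_cast; ring
    rw [h2]; ring
  · rcases Int.even_or_odd n with ⟨r, hr⟩ | ⟨r, hr⟩
    · exact ⟨r, by simp only; omega⟩
    · exfalso
      apply hn
      have : ((-1 : ℂ)) ^ n = -1 := by
        rw [hr, zpow_add₀ (by norm_num : (-1:ℂ) ≠ 0), zpow_mul]
        norm_num
      simp only [this]
      ring


lemma tsum_with_sign {z : ℂ} (hz : 0 < z.im) (A B : ℂ) :
    ∑' n : ℤ, (A + B * (-1 : ℂ) ^ n) * Complex.exp (2 * Real.pi * Complex.I * (n : ℂ) ^ 2 * z)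
      = (A - B) * phi z + 2 * B * phi (4 * z) := by
  have h1 := summable_phi_term hz
  have h2 : Summable fun n : ℤ =>
      (1 + (-1 : ℂ) ^ n) * Complex.exp (2 * Real.pi * Complex.I * (n : ℂ) ^ 2 * z) := by
    refine Summable.of_norm_bounded ((summable_norm_iff.mpr h1).mul_left 2) fun n => ?_
    rw [norm_mul]
    gcongr
    calc ‖1 + (-1:ℂ)^n‖ ≤ ‖(1:ℂ)‖ + ‖(-1:ℂ)^n‖ := norm_add_le _ _
      _ = 2 := by rw [norm_zpow]; norm_num
  calc ∑' n : ℤ, (A + B * (-1 : ℂ) ^ n) * Complex.exp (2 * Real.pi * Complex.I * (n : ℂ) ^ 2 * z)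
      = ∑' n : ℤ, ((A - B) * Complex.exp (2 * Real.pi * Complex.I * (n : ℂ) ^ 2 * z)
          + B * ((1 + (-1 : ℂ) ^ n) * Complex.exp (2 * Real.pi * Complex.I * (n : ℂ) ^ 2 * z))) :=
        tsum_congr fun n => by ring
    _ = (A - B) * phi z + B * (2 * phi (4 * z)) := by
        rw [Summable.tsum_add (h1.mul_left _) (h2.mul_left B), tsum_mul_left, tsum_mul_left,
          tsum_even_part hz]
        rfl
    _ = (A - B) * phi z + 2 * B * phi (4 * z) := by ring

lemma exp_pi_div_two_mul_I : Complex.exp (Real.pi / 2 * Complex.I) = Complex.I := by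
  rw [Complex.exp_mul_I,
    show ((Real.pi : ℂ) / 2) = ((Real.pi / 2 : ℝ) : ℂ) by push_cast; ring,
    ← Complex.ofReal_cos, ← Complex.ofReal_sin, Real.cos_pi_div_two, Real.sin_pi_div_two]
  simp

lemma exp_quarter (n : ℤ) :
    Complex.exp (2 * Real.pi * Complex.I * (n : ℂ) ^ 2 * (1/4 : ℂ))
      = (1 + Complex.I)/2 + (1 - Complex.I)/2 * (-1 : ℂ) ^ n := by
  rcases Int.even_or_odd n with ⟨m, hm⟩ | ⟨m, hm⟩
  · have hpow : ((-1 : ℂ)) ^ n = 1 := by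
      rw [hm, show m + m = 2 * m by ring, zpow_mul]; norm_num
    have : (2 * Real.pi * Complex.I * (n : ℂ) ^ 2 * (1/4 : ℂ))
        = ((m ^ 2 : ℤ) : ℂ) * (2 * Real.pi * Complex.I) := by
      rw [hm]; push_cast; ring
    rw [this, Complex.exp_int_mul_two_pi_mul_I, hpow]
    ring
  · have hpow : ((-1 : ℂ)) ^ n = -1 := by
      rw [hm, zpow_add₀ (by norm_num : (-1:ℂ) ≠ 0), zpow_mul]; norm_num
    have : (2 * Real.pi * Complex.I * (n : ℂ) ^ 2 * (1/4 : ℂ))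
        = ((m ^ 2 + m : ℤ) : ℂ) * (2 * Real.pi * Complex.I) + Real.pi / 2 * Complex.I := by
      rw [hm]; push_cast; ring
    rw [this, Complex.exp_add, Complex.exp_int_mul_two_pi_mul_I, _root_.exp_pi_div_two_mul_I, hpow]
    ring

lemma exp_three_quarter (n : ℤ) :
    Complex.exp (2 * Real.pi * Complex.I * (n : ℂ) ^ 2 * (3/4 : ℂ))
      = (1 - Complex.I)/2 + (1 + Complex.I)/2 * (-1 : ℂ) ^ n := by
  rcases Int.even_or_odd n with ⟨m, hm⟩ | ⟨m, hm⟩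
  · have hpow : ((-1 : ℂ)) ^ n = 1 := by
      rw [hm, show m + m = 2 * m by ring, zpow_mul]; norm_num
    have : (2 * Real.pi * Complex.I * (n : ℂ) ^ 2 * (3/4 : ℂ))
        = ((3 * m ^ 2 : ℤ) : ℂ) * (2 * Real.pi * Complex.I) := by
      rw [hm]; push_cast; ring
    rw [this, Complex.exp_int_mul_two_pi_mul_I, hpow]
    ring
  · have hpow : ((-1 : ℂ)) ^ n = -1 := by
      rw [hm, zpow_add₀ (by norm_num : (-1:ℂ) ≠ 0), zpow_mul]; norm_num
    have : (2 * Real.pi * Complex.I * (n : ℂ) ^ 2 * (3/4 : ℂ))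
        = ((3 * m ^ 2 + 3 * m : ℤ) : ℂ) * (2 * Real.pi * Complex.I)
          + (Real.pi * Complex.I + Real.pi / 2 * Complex.I) := by
      rw [hm]; push_cast; ring
    rw [this, Complex.exp_add, Complex.exp_int_mul_two_pi_mul_I, Complex.exp_add,
      Complex.exp_pi_mul_I, _root_.exp_pi_div_two_mul_I, hpow]
    ring

lemma phi_quarter {z : ℂ} (hz : 0 < z.im) :
    phi (1/4 + z) = (1 - Complex.I) * phi (4 * z) + Complex.I * phi z := by
  have key : ∀ n : ℤ, Complex.exp (2 * Real.pi * Complex.I * (n : ℂ) ^ 2 * (1/4 + z))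
      = ((1 + Complex.I)/2 + (1 - Complex.I)/2 * (-1 : ℂ) ^ n)
        * Complex.exp (2 * Real.pi * Complex.I * (n : ℂ) ^ 2 * z) := by
    intro n
    rw [← exp_quarter n, ← Complex.exp_add]
    congr 1
    ring
  rw [phi, tsum_congr key, tsum_with_sign hz]
  ring

lemma phi_three_quarter {z : ℂ} (hz : 0 < z.im) :
    phi (3/4 + z) = (1 + Complex.I) * phi (4 * z) - Complex.I * phi z := by
  have key : ∀ n : ℤ, Complex.exp (2 * Real.pi * Complex.I * (n : ℂ) ^ 2 * (3/4 + z))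
      = ((1 - Complex.I)/2 + (1 + Complex.I)/2 * (-1 : ℂ) ^ n)
        * Complex.exp (2 * Real.pi * Complex.I * (n : ℂ) ^ 2 * z) := by
    intro n
    rw [← exp_three_quarter n, ← Complex.exp_add]
    congr 1
    ring
  rw [phi, tsum_congr key, tsum_with_sign hz]
  ring

lemma jacobiTheta_inv {t : ℂ} (ht : 0 < t.im) :
    jacobiTheta (-1 / t) = (-Complex.I * t) ^ (1/2 : ℂ) * jacobiTheta t := by
  have := jacobiTheta_S_smul ⟨t, ht⟩
  rw [UpperHalfPlane.modular_S_smul] at this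
  simp only [UpperHalfPlane.coe_mk, show ((⟨t, ht⟩ : UpperHalfPlane) : ℂ) = t from rfl] at this
  rw [show (-1 / t : ℂ) = (-t)⁻¹ by rw [inv_neg]; ring]
  exact this

lemma sq_half_cpow {x : ℂ} (hx : x ≠ 0) : x ^ (1/2 : ℂ) * x ^ (1/2 : ℂ) = x := by
  rw [← Complex.cpow_add _ _ hx]
  norm_num

lemma four_mul_cpow {x : ℂ} (hx : x ≠ 0) :
    ((4 : ℂ) * x) ^ (1/2 : ℂ) = 2 * x ^ (1/2 : ℂ) := by
  have h4x : (4 : ℂ) * x ≠ 0 := mul_ne_zero (by norm_num) hx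
  rw [Complex.cpow_def_of_ne_zero h4x, Complex.cpow_def_of_ne_zero hx,
    show ((4 : ℂ)) = ((4 : ℝ) : ℂ) by norm_num,
    Complex.log_ofReal_mul (by norm_num) hx, add_mul, Complex.exp_add]
  congr 1
  rw [show ((Real.log 4 : ℂ)) * (1/2) = ((Real.log 4 / 2 : ℝ) : ℂ) by push_cast; ring,
    show Real.log 4 / 2 = Real.log 2 by
      rw [show (4:ℝ) = 2^2 by norm_num, Real.log_pow]; push_cast; ring,
    ← Complex.ofReal_exp, Real.exp_log (by norm_num)]
  norm_num

lemma phi_inv_eq {t : ℂ} (ht : 0 < t.im) :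
    phi (-1/(4*t)) = (-Complex.I * (2*t)) ^ (1/2 : ℂ) * jacobiTheta (2*t) := by
  have htne : t ≠ 0 := fun h => by simp [h] at ht
  rw [phi_eq_jacobiTheta, show 2 * (-1/(4*t)) = -1/(2*t) by field_simp; ring,
    jacobiTheta_inv (show 0 < (2*t).im by simp [Complex.mul_im]; linarith)]

lemma im_neg_inv_pos {c : ℂ} (hc : 0 < c.im) : 0 < (-1/(4*c)).im := by
  have h4c : (4*c : ℂ) ≠ 0 := mul_ne_zero (by norm_num) (fun h => by simp [h] at hc)
  rw [show (-1/(4*c) : ℂ) = -((4*c)⁻¹) by ring, Complex.neg_im, Complex.inv_im]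
  have h1 : (4*c : ℂ).im = 4 * c.im := by simp [Complex.mul_im]
  have h2 : 0 < Complex.normSq (4*c) := Complex.normSq_pos.mpr h4c
  rw [h1, neg_div, neg_neg]
  exact div_pos (by linarith) h2

lemma phi_w_sq {c : ℂ} (hc : 0 < c.im) :
    phi (1/4 + (-1/(4*c))) ^ 2
      = (-Complex.I * c / 2) *
        ((1 - Complex.I) * jacobiTheta (2*(c/4)) + 2 * Complex.I * jacobiTheta (2*c)) ^ 2 := by
  have hcne : c ≠ 0 := fun h => by simp [h] at hc
  have hc4 : 0 < (c/4).im := by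
    have : (c/4 : ℂ).im = c.im / 4 := by
      simp [Complex.div_im, Complex.normSq_apply]
    rw [this]
    linarith
  have ha : (-Complex.I * (2 * (c/4)) : ℂ) ≠ 0 := by
    intro h
    apply hcne
    simpa [Complex.I_ne_zero] using h
  rw [phi_quarter (im_neg_inv_pos hc),
    show (4:ℂ) * (-1/(4*c)) = -1/(4*(c/4)) by field_simp,
    phi_inv_eq hc4, phi_inv_eq hc,
    show -Complex.I * (2*c) = 4 * (-Complex.I * (2 * (c/4))) by ring,
    four_mul_cpow ha]
  have hs := sq_half_cpow ha
  linear_combination (((1 - Complex.I) * jacobiTheta (2*(c/4))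
    + 2 * Complex.I * jacobiTheta (2*c)) ^ 2) * hs

lemma phi_3w_sq {c : ℂ} (hc : 0 < c.im) :
    phi (3/4 + (-1/(4*c))) ^ 2
      = (-Complex.I * c / 2) *
        ((1 + Complex.I) * jacobiTheta (2*(c/4)) - 2 * Complex.I * jacobiTheta (2*c)) ^ 2 := by
  have hcne : c ≠ 0 := fun h => by simp [h] at hc
  have hc4 : 0 < (c/4).im := by
    have : (c/4 : ℂ).im = c.im / 4 := by
      simp [Complex.div_im, Complex.normSq_apply]
    rw [this]
    linarith
  have ha : (-Complex.I * (2 * (c/4)) : ℂ) ≠ 0 := by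
    intro h
    apply hcne
    simpa [Complex.I_ne_zero] using h
  rw [phi_three_quarter (im_neg_inv_pos hc),
    show (4:ℂ) * (-1/(4*c)) = -1/(4*(c/4)) by field_simp,
    phi_inv_eq hc4, phi_inv_eq hc,
    show -Complex.I * (2*c) = 4 * (-Complex.I * (2 * (c/4))) by ring,
    four_mul_cpow ha]
  have hs := sq_half_cpow ha
  linear_combination (((1 + Complex.I) * jacobiTheta (2*(c/4))
    - 2 * Complex.I * jacobiTheta (2*c)) ^ 2) * hs

lemma tendsto_jacobiTheta_aux (α : ℝ) (hα : 0 < α) :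
    Tendsto (fun z : ℍ => jacobiTheta ((α : ℂ) * ((4:ℂ) * (z:ℂ) + 1))) atImInfty (𝓝 1) := by
  have h0 : Tendsto (fun τ : ℂ => Real.exp (-Real.pi * τ.im)) (comap Complex.im atTop) (𝓝 0) := by
    have h1 : Tendsto Complex.im (comap Complex.im atTop) atTop := tendsto_comap
    have h2 : Tendsto (fun x : ℝ => Real.exp (-Real.pi * x)) atTop (𝓝 0) := by
      have h3 : Tendsto (fun x : ℝ => -Real.pi * x) atTop atBot :=
        tendsto_neg_atTop_atBot.comp (tendsto_id.const_mul_atTop Real.pi_pos) |>.congr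
          (fun x => by simp)
      exact Real.tendsto_exp_atBot.comp h3
    exact h2.comp h1
  have hjt : Tendsto jacobiTheta (comap Complex.im atTop) (𝓝 1) := by
    have h4 := isBigO_at_im_infty_jacobiTheta_sub_one.trans_tendsto h0
    have h5 := h4.add (tendsto_const_nhds (x := (1:ℂ)))
    simpa using h5
  apply hjt.comp
  rw [tendsto_comap_iff]
  have heq : (Complex.im ∘ fun z : ℍ => (α : ℂ) * ((4:ℂ) * (z:ℂ) + 1))
      = fun z : ℍ => (α * 4) * z.im := by
    funext z
    simp [Function.comp, Complex.mul_im, Complex.add_im, Complex.mul_re, Complex.add_re,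
      Complex.ofReal_re, Complex.ofReal_im, UpperHalfPlane.coe_im]
    ring
  rw [heq]
  have him : Tendsto (fun z : ℍ => z.im) atImInfty atTop := tendsto_comap
  exact him.const_mul_atTop (by positivity)

lemma alg_aux {c a b : ℂ} (hc : c ≠ 0) {N n m : ℕ} (h : N = n + m) :
    (c ^ N)⁻¹ * ((c * a) ^ n * (c * b) ^ m) = a ^ n * b ^ m := by
  subst h
  rw [pow_add, mul_pow, mul_pow, mul_inv]
  have h1 : (c ^ n : ℂ) ≠ 0 := pow_ne_zero _ hc
  have h2 : (c ^ m : ℂ) ≠ 0 := pow_ne_zero _ hc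
  field_simp

/-- The first term of the Fourier expansion of `F(z) = φ^{4k−2i}(z) φ^{2i}(3z)` at the
cusp `1/4`. -/
theorem phi_pow_first_term_at_cusp_14 (k i : ℕ) (hk : 2 ≤ k) (hi : i ≤ 2 * k) :
    Filter.Tendsto (fun z : UpperHalfPlane =>
        (((4 : ℂ) * (z : ℂ) + 1) ^ (2 * k))⁻¹ *
          (phi ((z : ℂ) / ((4 : ℂ) * (z : ℂ) + 1)) ^ (4 * k - 2 * i) *
            phi (3 * ((z : ℂ) / ((4 : ℂ) * (z : ℂ) + 1))) ^ (2 * i)))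
      UpperHalfPlane.atImInfty
      (nhds ((-1 : ℂ) ^ i / 3 ^ i)) := by
  have hcim : ∀ z : ℍ, 0 < ((4:ℂ) * (z:ℂ) + 1).im := by
    intro z
    have h1 : ((4:ℂ) * (z:ℂ) + 1).im = 4 * z.im := by
      simp [Complex.add_im, Complex.mul_im, UpperHalfPlane.coe_im]
    rw [h1]
    linarith [z.im_pos]
  have hcne : ∀ z : ℍ, ((4:ℂ) * (z:ℂ) + 1) ≠ 0 := by
    intro z h
    have := hcim z
    rw [h] at this
    simp at this
  -- convergence of the four theta pieces
  have j1 : Tendsto (fun z : ℍ => jacobiTheta (2 * (((4:ℂ) * (z:ℂ) + 1)/4))) atImInfty (𝓝 1) := by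
    refine (tendsto_jacobiTheta_aux (1/2) (by norm_num)).congr fun z => ?_
    congr 1
    push_cast
    ring
  have j2 : Tendsto (fun z : ℍ => jacobiTheta (2 * ((4:ℂ) * (z:ℂ) + 1))) atImInfty (𝓝 1) := by
    refine (tendsto_jacobiTheta_aux 2 (by norm_num)).congr fun z => ?_
    norm_num
  have j3 : Tendsto (fun z : ℍ => jacobiTheta (2 * ((((4:ℂ) * (z:ℂ) + 1)/3)/4)))
      atImInfty (𝓝 1) := by
    refine (tendsto_jacobiTheta_aux (1/6) (by norm_num)).congr fun z => ?_
    congr 1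
    push_cast
    ring
  have j4 : Tendsto (fun z : ℍ => jacobiTheta (2 * (((4:ℂ) * (z:ℂ) + 1)/3)))
      atImInfty (𝓝 1) := by
    refine (tendsto_jacobiTheta_aux (2/3) (by norm_num)).congr fun z => ?_
    congr 1
    push_cast
    ring
  have t1 : Tendsto (fun z : ℍ => (-Complex.I/2) *
      ((1 - Complex.I) * jacobiTheta (2 * (((4:ℂ) * (z:ℂ) + 1)/4))
        + 2 * Complex.I * jacobiTheta (2 * ((4:ℂ) * (z:ℂ) + 1))) ^ 2)
      atImInfty (𝓝 1) := by
    have h := (tendsto_const_nhds (x := -Complex.I/2)).mul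
      ((((tendsto_const_nhds (x := 1 - Complex.I)).mul j1).add
        ((tendsto_const_nhds (x := 2 * Complex.I)).mul j2)).pow 2)
    have hval : (-Complex.I/2) * ((1 - Complex.I) * 1 + 2 * Complex.I * 1) ^ 2 = 1 := by
      linear_combination (-(1 + Complex.I/2)) * Complex.I_sq
    rwa [hval] at h
  have t2 : Tendsto (fun z : ℍ => (-Complex.I/6) *
      ((1 + Complex.I) * jacobiTheta (2 * ((((4:ℂ) * (z:ℂ) + 1)/3)/4))
        - 2 * Complex.I * jacobiTheta (2 * (((4:ℂ) * (z:ℂ) + 1)/3))) ^ 2)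
      atImInfty (𝓝 ((-1 : ℂ)/3)) := by
    have h := (tendsto_const_nhds (x := -Complex.I/6)).mul
      ((((tendsto_const_nhds (x := 1 + Complex.I)).mul j3).sub
        ((tendsto_const_nhds (x := 2 * Complex.I)).mul j4)).pow 2)
    have hval : (-Complex.I/6) * ((1 + Complex.I) * 1 - 2 * Complex.I * 1) ^ 2 = (-1 : ℂ)/3 := by
      linear_combination (1/3 - Complex.I/6) * Complex.I_sq
    rwa [hval] at h
  -- pointwise identity
  have key : ∀ z : ℍ,
      ((-Complex.I/2) * ((1 - Complex.I) * jacobiTheta (2 * (((4:ℂ) * (z:ℂ) + 1)/4))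
          + 2 * Complex.I * jacobiTheta (2 * ((4:ℂ) * (z:ℂ) + 1))) ^ 2) ^ (2 * k - i) *
        ((-Complex.I/6) * ((1 + Complex.I) * jacobiTheta (2 * ((((4:ℂ) * (z:ℂ) + 1)/3)/4))
          - 2 * Complex.I * jacobiTheta (2 * (((4:ℂ) * (z:ℂ) + 1)/3))) ^ 2) ^ i
      = (((4 : ℂ) * (z : ℂ) + 1) ^ (2 * k))⁻¹ *
          (phi ((z : ℂ) / ((4 : ℂ) * (z : ℂ) + 1)) ^ (4 * k - 2 * i) *
            phi (3 * ((z : ℂ) / ((4 : ℂ) * (z : ℂ) + 1))) ^ (2 * i)) := by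
    intro z
    have hc := hcim z
    have hne := hcne z
    set c : ℂ := (4:ℂ) * (z:ℂ) + 1 with hcdef
    have hc3 : 0 < ((c/3 : ℂ)).im := by
      have h1 : ((c/3 : ℂ)).im = c.im / 3 := by
        simp [Complex.div_im, Complex.normSq_apply]
      rw [h1]
      linarith
    have hw : (z : ℂ) / c = 1/4 + (-1/(4*c)) := by
      field_simp
      ring
    have h3w : 3 * ((z : ℂ) / c) = 3/4 + (-1/(4*(c/3))) := by
      field_simp
      ring
    have hsq1 : phi ((z : ℂ) / c) ^ 2
        = c * ((-Complex.I/2) * ((1 - Complex.I) * jacobiTheta (2 * (c/4))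
            + 2 * Complex.I * jacobiTheta (2 * c)) ^ 2) := by
      rw [hw, phi_w_sq hc]
      ring
    have hsq2 : phi (3 * ((z : ℂ) / c)) ^ 2
        = c * ((-Complex.I/6) * ((1 + Complex.I) * jacobiTheta (2 * ((c/3)/4))
            - 2 * Complex.I * jacobiTheta (2 * (c/3))) ^ 2) := by
      rw [h3w, phi_3w_sq hc3]
      ring
    have e1 : phi ((z : ℂ) / c) ^ (4 * k - 2 * i)
        = (c * ((-Complex.I/2) * ((1 - Complex.I) * jacobiTheta (2 * (c/4))
            + 2 * Complex.I * jacobiTheta (2 * c)) ^ 2)) ^ (2 * k - i) := by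
      rw [show 4 * k - 2 * i = 2 * (2 * k - i) by omega, pow_mul, hsq1]
    have e2 : phi (3 * ((z : ℂ) / c)) ^ (2 * i)
        = (c * ((-Complex.I/6) * ((1 + Complex.I) * jacobiTheta (2 * ((c/3)/4))
            - 2 * Complex.I * jacobiTheta (2 * (c/3))) ^ 2)) ^ i := by
      rw [pow_mul, hsq2]
    rw [e1, e2, alg_aux hne (by omega : 2 * k = (2 * k - i) + i)]
  have tfinal := (t1.pow (2 * k - i)).mul (t2.pow i)
  have hval : ((1:ℂ) ^ (2 * k - i)) * ((-1 : ℂ)/3) ^ i = (-1 : ℂ) ^ i / 3 ^ i := by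
    rw [one_pow, one_mul, div_pow]
  rw [← hval]
  exact Tendsto.congr key tfinal
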